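/- arXiv:2601.00219 — 2 statements merged into one kernel-verified Lean document; each statement's English description precedes it below -/
import Mathlib

section
/- Let α be a finite type and ℓ : α → ℕ a function with ∑_x (2 : ℝ)^(−ℓ x) ≤ 1. Then there exists an injective, prefix-free binary code C : α → List Bool with (C x).length = ℓ x for every x; prefix-free means that for all x ≠ y, C x is not a prefix of C y. -/
/-- Converse of Kraft's inequality: any lengths `ℓ` with
`∑ 2^{-ℓ x} ≤ 1` are realizable by an injective, prefix-free binary code. -/
theorem kraft_converse
    {α : Type*} [Fintype α]
    (ℓ : α → ℕ) (hkraft : ∑ x, (2 : ℝ) ^ (-(ℓ x : ℤ)) ≤ 1) :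
    ∃ C : α → List Bool,
      Function.Injective C ∧
      (∀ x y, x ≠ y → ¬ (C x <+: C y)) ∧
      (∀ x, (C x).length = ℓ x) := by
  classical
  set n := Fintype.card α with hn
  obtain ⟨g, hg⟩ : ∃ g : Fin n ≃ α, Monotone (ℓ ∘ g) := by
    refine ⟨((Tuple.sort (ℓ ∘ (Fintype.equivFin α).symm)) : Equiv.Perm (Fin n)).trans
      (Fintype.equivFin α).symm, ?_⟩
    exact Tuple.monotone_sort (ℓ ∘ (Fintype.equivFin α).symm)
  set L : Fin n → ℕ := fun i => ℓ (g i) with hL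
  set N : Fin n → ℕ := fun i => ∑ k ∈ Finset.Iio i, 2 ^ (L i - L k) with hN
  -- key bound from Kraft's inequality
  have hNlt : ∀ i, N i < 2 ^ L i := by
    intro i
    have hsum : ∑ k ∈ Finset.Iio i, (2 : ℝ) ^ (-(L k : ℤ)) < 1 := by
      have h1 : ∑ k ∈ Finset.Iio i, (2 : ℝ) ^ (-(L k : ℤ)) + (2 : ℝ) ^ (-(L i : ℤ))
          = ∑ k ∈ Finset.Iic i, (2 : ℝ) ^ (-(L k : ℤ)) := by
        rw [← Finset.Iio_insert i, Finset.sum_insert (by simp)]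
        ring
      have h2 : ∑ k ∈ Finset.Iic i, (2 : ℝ) ^ (-(L k : ℤ))
          ≤ ∑ k : Fin n, (2 : ℝ) ^ (-(L k : ℤ)) := by
        refine Finset.sum_le_sum_of_subset_of_nonneg (Finset.subset_univ _) ?_
        intro k _ _; positivity
      have h3 : ∑ k : Fin n, (2 : ℝ) ^ (-(L k : ℤ)) = ∑ x, (2 : ℝ) ^ (-(ℓ x : ℤ)) :=
        Equiv.sum_comp g (fun x => (2 : ℝ) ^ (-(ℓ x : ℤ)))
      have hpos : (0 : ℝ) < (2 : ℝ) ^ (-(L i : ℤ)) := by positivity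
      linarith
    have hreal : (N i : ℝ) < 2 ^ L i := by
      have hcast : (N i : ℝ) = ∑ k ∈ Finset.Iio i, (2 : ℝ) ^ ((L i : ℤ) - (L k : ℤ)) := by
        rw [hN]; push_cast
        refine Finset.sum_congr rfl ?_
        intro k hk
        have hk' : L k ≤ L i := hg (le_of_lt (Finset.mem_Iio.mp hk))
        rw [← zpow_natCast (2 : ℝ) (L i - L k)]
        congr 1
        omega
      have : ∑ k ∈ Finset.Iio i, (2 : ℝ) ^ ((L i : ℤ) - (L k : ℤ))
          = (2 : ℝ) ^ (L i : ℤ) * ∑ k ∈ Finset.Iio i, (2 : ℝ) ^ (-(L k : ℤ)) := by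
        rw [Finset.mul_sum]
        refine Finset.sum_congr rfl ?_
        intro k _
        rw [← zpow_add₀ (by norm_num : (2:ℝ) ≠ 0), ← sub_eq_add_neg]
      rw [hcast, this]
      calc (2 : ℝ) ^ (L i : ℤ) * ∑ k ∈ Finset.Iio i, (2 : ℝ) ^ (-(L k : ℤ))
          < (2 : ℝ) ^ (L i : ℤ) * 1 := by
            apply mul_lt_mul_of_pos_left hsum; positivity
        _ = 2 ^ L i := by rw [mul_one, zpow_natCast]
    exact_mod_cast hreal
  -- step bound
  have hNstep : ∀ j i : Fin n, j < i → 2 ^ (L i - L j) * (N j + 1) ≤ N i := by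
    intro j i hji
    have hLji : L j ≤ L i := hg (le_of_lt hji)
    have hsub : Finset.Iic j ⊆ Finset.Iio i := by
      intro k hk
      simp only [Finset.mem_Iic] at hk
      exact Finset.mem_Iio.mpr (lt_of_le_of_lt hk hji)
    have h1 : ∑ k ∈ Finset.Iic j, 2 ^ (L i - L k) ≤ N i := by
      rw [hN]
      exact Finset.sum_le_sum_of_subset hsub
    have h2 : ∑ k ∈ Finset.Iic j, 2 ^ (L i - L k) = 2 ^ (L i - L j) * (N j + 1) := by
      rw [← Finset.Iio_insert j, Finset.sum_insert (by simp), hN, mul_add, mul_one,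
        Finset.mul_sum]
      rw [add_comm]
      congr 1
      refine Finset.sum_congr rfl ?_
      intro k hk
      have hk' : L k ≤ L j := hg (le_of_lt (Finset.mem_Iio.mp hk))
      rw [← pow_add]
      congr 1; omega
    omega
  -- the code
  set C : α → List Bool :=
    fun x => List.ofFn (fun t : Fin (ℓ x) => (N (g.symm x)).testBit (ℓ x - 1 - t)) with hC
  have hlen : ∀ x, (C x).length = ℓ x := fun x => List.length_ofFn
  have hLg : ∀ x, L (g.symm x) = ℓ x := fun x => by simp [hL]
  -- prefix-free
  have hPF : ∀ x y, x ≠ y → ¬ (C x <+: C y) := by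
    intro x y hxy hp
    set i := g.symm x with hi
    set j := g.symm y with hj
    have hij : i ≠ j := fun h => hxy (by rw [← g.apply_symm_apply x, ← g.apply_symm_apply y, ← hi, ← hj, h])
    have hlenle : ℓ x ≤ ℓ y := by
      have := hp.length_le
      rwa [hlen, hlen] at this
    have hLij : L i ≤ L j := by rwa [hLg, hLg]
    have hbits : ∀ t, t < L i → (N i).testBit (L i - 1 - t) = (N j).testBit (L j - 1 - t) := by
      intro t ht
      have ht' : t < (C x).length := by rw [hlen, ← hLg x]; exact ht
      have := hp.getElem ht'
      simp only [hC, List.getElem_ofFn] at this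
      rw [hi, hj, hLg x, hLg y]
      exact this
    have heq : N i = N j >>> (L j - L i) := by
      apply Nat.eq_of_testBit_eq
      intro k
      rw [Nat.testBit_shiftRight]
      by_cases hk : k < L i
      · have := hbits (L i - 1 - k) (by omega)
        rw [show L i - 1 - (L i - 1 - k) = k by omega,
            show L j - 1 - (L i - 1 - k) = L j - L i + k by omega] at this
        exact this
      · rw [Nat.testBit_lt_two_pow, Nat.testBit_lt_two_pow]
        · calc N j < 2 ^ L j := hNlt j
            _ ≤ 2 ^ (L j - L i + k) := Nat.pow_le_pow_right (by norm_num) (by omega)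
        · calc N i < 2 ^ L i := hNlt i
            _ ≤ 2 ^ k := Nat.pow_le_pow_right (by norm_num) (by omega)
    rcases lt_trichotomy i j with h | h | h
    · have hstep := hNstep i j h
      have hdiv : N i + 1 ≤ N j / 2 ^ (L j - L i) :=
        (Nat.le_div_iff_mul_le (Nat.two_pow_pos _)).mpr
          (by rw [mul_comm]; exact hstep)
      have heq' : N i = N j / 2 ^ (L j - L i) := by
        rw [heq, Nat.shiftRight_eq_div_pow]
      omega
    · exact hij h
    · have hLji : L j ≤ L i := hg h.le
      have h0 : L j - L i = 0 := by omega
      have heq' : N i = N j := by rw [heq, h0, Nat.shiftRight_zero]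
      have hstep := hNstep j i h
      rw [show L i - L j = 0 by omega, pow_zero, one_mul] at hstep
      omega
  refine ⟨C, ?_, hPF, hlen⟩
  intro x y h
  by_contra hxy
  exact hPF x y hxy (h ▸ List.prefix_refl _)
end

section
/- Let α be a nonempty finite type and p : α → ℝ a probability distribution with p x > 0 for every x. Then there exists an injective prefix-free binary code C : α → List Bool whose expected length is within one bit of the entropy: ∑_x p x · (C x).length < H(p) + 1, where H(p) = −∑_x p x · logb 2 (p x). -/
open Real

namespace PrefixCodeAux

open Finset

/-- Fixed-length big-endian binary encoding of a natural number. -/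
def natCode (ℓ a : ℕ) : List Bool := (List.range ℓ).map fun k => a.testBit (ℓ - 1 - k)

@[simp] lemma natCode_length (ℓ a : ℕ) : (natCode ℓ a).length = ℓ := by
  simp [natCode]

lemma natCode_prefix {ℓ₁ a₁ ℓ₂ a₂ : ℕ} (h1 : a₁ < 2 ^ ℓ₁) (h2 : a₂ < 2 ^ ℓ₂)
    (h : natCode ℓ₁ a₁ <+: natCode ℓ₂ a₂) :
    ℓ₁ ≤ ℓ₂ ∧ a₂ / 2 ^ (ℓ₂ - ℓ₁) = a₁ := by
  have hlen : ℓ₁ ≤ ℓ₂ := by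
    have := h.length_le
    simpa using this
  refine ⟨hlen, ?_⟩
  apply Nat.eq_of_testBit_eq
  intro i
  have hdiv : ∀ j, (a₂ / 2 ^ (ℓ₂ - ℓ₁)).testBit j = a₂.testBit ((ℓ₂ - ℓ₁) + j) := by
    intro j
    rw [← Nat.shiftRight_eq_div_pow, Nat.testBit_shiftRight]
  by_cases hi : i < ℓ₁
  · have hk : ℓ₁ - 1 - i < ℓ₁ := by omega
    have := h.getElem (i := ℓ₁ - 1 - i) (by simpa using hk)
    simp only [natCode, List.getElem_map, List.getElem_range] at this
    have e1 : ℓ₁ - 1 - (ℓ₁ - 1 - i) = i := by omega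
    have e2 : ℓ₂ - 1 - (ℓ₁ - 1 - i) = (ℓ₂ - ℓ₁) + i := by omega
    rw [e1, e2] at this
    rw [hdiv i, this]
  · push_neg at hi
    have hb1 : a₁.testBit i = false := Nat.testBit_eq_false_of_lt (lt_of_lt_of_le h1 (Nat.pow_le_pow_right (by norm_num) hi))
    have hq : a₂ / 2 ^ (ℓ₂ - ℓ₁) < 2 ^ ℓ₁ := by
      apply Nat.div_lt_of_lt_mul
      calc a₂ < 2 ^ ℓ₂ := h2
        _ = 2 ^ (ℓ₂ - ℓ₁) * 2 ^ ℓ₁ := by rw [← pow_add]; congr 1; omega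
    have hb2 : (a₂ / 2 ^ (ℓ₂ - ℓ₁)).testBit i = false :=
      Nat.testBit_eq_false_of_lt (lt_of_lt_of_le hq (Nat.pow_le_pow_right (by norm_num) hi))
    rw [hb1, hb2]

/-- Kraft's converse: given monotone lengths satisfying Kraft's inequality,
there is a prefix-free code with those lengths. -/
lemma kraft_converse {n : ℕ} (ℓ : Fin n → ℕ) (hmono : Monotone ℓ)
    (hkraft : ∑ j, ((2 : ℝ) ^ ℓ j)⁻¹ ≤ 1) :
    ∃ C : Fin n → List Bool, (∀ i, (C i).length = ℓ i) ∧
      ∀ i j, i ≠ j → ¬ (C i <+: C j) := by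
  classical
  -- partial sums
  set a : Fin n → ℕ := fun i => ∑ j ∈ Iio i, 2 ^ (ℓ i - ℓ j) with ha
  -- bound: a i + 1 ≤ 2 ^ ℓ i
  have hbound : ∀ i, a i + 1 ≤ 2 ^ ℓ i := by
    intro i
    have hsub : ∑ j ∈ Iic i, ((2 : ℝ) ^ ℓ j)⁻¹ ≤ 1 := by
      refine le_trans (Finset.sum_le_sum_of_subset_of_nonneg (Finset.subset_univ _) ?_) hkraft
      intro j _ _; positivity
    have hcast : ((a i + 1 : ℕ) : ℝ) = (2 : ℝ) ^ ℓ i * ∑ j ∈ Iic i, ((2 : ℝ) ^ ℓ j)⁻¹ := by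
      rw [← Finset.Iio_insert i, Finset.sum_insert (by simp), mul_add,
        mul_inv_cancel₀ (by positivity), Finset.mul_sum]
      push_cast [ha]
      rw [add_comm]
      congr 1
      refine Finset.sum_congr rfl fun j hj => ?_
      have hji : ℓ j ≤ ℓ i := hmono (le_of_lt (Finset.mem_Iio.mp hj))
      rw [eq_comm, mul_inv_eq_iff_eq_mul₀ (by positivity), ← pow_add]
      norm_cast
      congr 1
      omega
    have : ((a i + 1 : ℕ) : ℝ) ≤ (2 : ℝ) ^ ℓ i := by
      rw [hcast]
      calc (2:ℝ) ^ ℓ i * ∑ j ∈ Iic i, ((2 : ℝ) ^ ℓ j)⁻¹ ≤ (2:ℝ) ^ ℓ i * 1 :=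
            mul_le_mul_of_nonneg_left hsub (by positivity)
        _ = 2 ^ ℓ i := mul_one _
    exact_mod_cast this
  -- separation
  have hsep : ∀ i j : Fin n, i < j → (a i + 1) * 2 ^ (ℓ j - ℓ i) ≤ a j := by
    intro i j hij
    have hsubset : Iic i ⊆ Iio j := fun k hk =>
      Finset.mem_Iio.mpr (lt_of_le_of_lt (Finset.mem_Iic.mp hk) hij)
    have h1 : ∑ k ∈ Iic i, 2 ^ (ℓ j - ℓ k) ≤ a j :=
      Finset.sum_le_sum_of_subset hsubset
    have h2 : ∑ k ∈ Iic i, 2 ^ (ℓ j - ℓ k) = (a i + 1) * 2 ^ (ℓ j - ℓ i) := by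
      rw [← Finset.Iio_insert i, Finset.sum_insert (by simp), ha, add_mul, one_mul,
        Finset.sum_mul, add_comm]
      congr 1
      refine Finset.sum_congr rfl fun k hk => ?_
      have hki : ℓ k ≤ ℓ i := hmono (le_of_lt (Finset.mem_Iio.mp hk))
      have hij' : ℓ i ≤ ℓ j := hmono (le_of_lt hij)
      rw [← pow_add]
      congr 1
      omega
    omega
  refine ⟨fun i => natCode (ℓ i) (a i), fun i => natCode_length _ _, ?_⟩
  intro i j hij hpre
  have hai : a i < 2 ^ ℓ i := by have := hbound i; omega
  have haj : a j < 2 ^ ℓ j := by have := hbound j; omega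
  obtain ⟨hle, hdiv⟩ := natCode_prefix hai haj hpre
  rcases lt_or_gt_of_ne hij with h | h
  · have hs := hsep i j h
    have : a i + 1 ≤ a j / 2 ^ (ℓ j - ℓ i) :=
      (Nat.le_div_iff_mul_le (Nat.pow_pos (by norm_num))).mpr hs
    omega
  · have hle' : ℓ j ≤ ℓ i := hmono h.le
    have heq : ℓ i = ℓ j := le_antisymm hle hle'
    have hs := hsep j i h
    rw [heq] at hs
    simp only [Nat.sub_self, pow_zero, mul_one] at hs
    rw [heq, Nat.sub_self, pow_zero, Nat.div_one] at hdiv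
    omega

end PrefixCodeAux

/-- Existence of a near-optimal prefix code: for any everywhere-positive
probability distribution on a nonempty finite type there is an injective
prefix-free binary code whose expected length is less than `H(p) + 1`. -/
theorem exists_prefix_code_within_one_bit
    {α : Type*} [Fintype α] [Nonempty α]
    (p : α → ℝ) (hp : ∀ x, 0 < p x) (hsum : ∑ x, p x = 1) :
    ∃ C : α → List Bool,
      Function.Injective C ∧
      (∀ x y, x ≠ y → ¬ (C x <+: C y)) ∧
      ∑ x, p x * ((C x).length : ℝ) < (-∑ x, p x * logb 2 (p x)) + 1 := by
  classical
  -- Shannon lengths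
  set L : α → ℕ := fun x => ⌈logb 2 (p x)⁻¹⌉₊ with hL
  have hp1 : ∀ x, p x ≤ 1 := by
    intro x
    calc p x ≤ ∑ y, p y := Finset.single_le_sum (fun y _ => (hp y).le) (Finset.mem_univ x)
      _ = 1 := hsum
  have hlog_nonneg : ∀ x, 0 ≤ logb 2 (p x)⁻¹ := fun x =>
    Real.logb_nonneg (by norm_num) ((one_le_inv₀ (hp x)).mpr (hp1 x))
  -- pointwise Kraft: (2^(L x))⁻¹ ≤ p x
  have hkraft_pt : ∀ x, ((2 : ℝ) ^ L x)⁻¹ ≤ p x := by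
    intro x
    have h1 : (p x)⁻¹ ≤ (2 : ℝ) ^ L x := by
      have := Real.rpow_le_rpow_of_exponent_le (x := (2:ℝ)) (by norm_num)
        (Nat.le_ceil (logb 2 (p x)⁻¹))
      rwa [Real.rpow_logb (by norm_num) (by norm_num) (inv_pos.mpr (hp x)),
        Real.rpow_natCast] at this
    exact (inv_le_comm₀ (by positivity) (hp x)).mpr h1
  -- sort the elements by length
  obtain ⟨n, ⟨g⟩⟩ : ∃ n, Nonempty (Fin n ≃ α) := ⟨Fintype.card α, ⟨(Fintype.equivFin α).symm⟩⟩
  set σ := Tuple.sort (fun i => L (g i)) with hσ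
  set e : Fin n ≃ α := σ.trans g with he
  have hmono : Monotone fun i => L (e i) := Tuple.monotone_sort (fun i => L (g i))
  have hkraft : ∑ j, ((2 : ℝ) ^ L (e j))⁻¹ ≤ 1 := by
    calc ∑ j, ((2 : ℝ) ^ L (e j))⁻¹ = ∑ x, ((2 : ℝ) ^ L x)⁻¹ :=
          Equiv.sum_comp e fun x => ((2 : ℝ) ^ L x)⁻¹
      _ ≤ ∑ x, p x := Finset.sum_le_sum fun x _ => hkraft_pt x
      _ = 1 := hsum
  obtain ⟨C₀, hlen, hpf⟩ := PrefixCodeAux.kraft_converse (fun i => L (e i)) hmono hkraft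
  refine ⟨fun x => C₀ (e.symm x), ?_, ?_, ?_⟩
  · intro x y hxy
    by_contra hne
    have hxy' : C₀ (e.symm x) = C₀ (e.symm y) := hxy
    have h1 : e.symm x ≠ e.symm y := fun h => hne (by simpa using congrArg e h)
    exact hpf _ _ h1 (by rw [hxy'])
  · intro x y hxy
    exact hpf _ _ (fun h => hxy (by simpa using congrArg e h))
  · have hlenx : ∀ x, ((C₀ (e.symm x)).length : ℝ) = L x := by
      intro x
      rw [hlen]
      simp
    calc ∑ x, p x * ((C₀ (e.symm x)).length : ℝ)
        = ∑ x, p x * (L x : ℝ) := by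
          refine Finset.sum_congr rfl fun x _ => by rw [hlenx]
      _ < ∑ x, p x * (logb 2 (p x)⁻¹ + 1) := by
          refine Finset.sum_lt_sum_of_nonempty Finset.univ_nonempty fun x _ => ?_
          exact mul_lt_mul_of_pos_left (Nat.ceil_lt_add_one (hlog_nonneg x)) (hp x)
      _ = (-∑ x, p x * logb 2 (p x)) + 1 := by
          have key : ∑ x, p x * (logb 2 (p x)⁻¹ + 1)
              = (-∑ x, p x * logb 2 (p x)) + ∑ x, p x := by
            rw [← Finset.sum_neg_distrib, ← Finset.sum_add_distrib]
            exact Finset.sum_congr rfl fun x _ => by rw [Real.logb_inv]; ring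
          rw [key, hsum]
end
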